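/- Degeneration yields asymptotic rate 1: if a k-partite globally entangled state ψ degenerates to φ (i.e., there exist matrices A_i(ε) with polynomial entries in ε such that (A₁(ε)⊗⋯⊗A_k(ε))ψ = ε^d φ + O(ε^{d+1})), and ω(ψ, GHZ) < ∞, then ψ^{⊗n} ⊗ GHZ_{ne+1} ⊵ φ^{⊗n} for every n, where e is the error degree of the degeneration; consequently ω(ψ,φ) ≤ 1. -/

import Mathlib

open scoped BigOperators

namespace Paper

def Restricts {k : ℕ} {ι κ : Fin k → Type} [∀ i, Fintype (ι i)] [∀ i, Fintype (κ i)]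
    (ψ : ((i : Fin k) → ι i) → ℂ) (φ : ((i : Fin k) → κ i) → ℂ) : Prop :=
  ∃ A : (i : Fin k) → κ i → ι i → ℂ,
    ∀ v, φ v = ∑ w : (i : Fin k) → ι i, (∏ i, A i (v i) (w i)) * ψ w

def pow {k : ℕ} {ι : Fin k → Type} (ψ : ((i : Fin k) → ι i) → ℂ) (m : ℕ) :
    ((i : Fin k) → (Fin m → ι i)) → ℂ :=
  fun v => ∏ j : Fin m, ψ (fun i => v i j)

def tprod {k : ℕ} {ι κ : Fin k → Type} (ψ : ((i : Fin k) → ι i) → ℂ)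
    (φ : ((i : Fin k) → κ i) → ℂ) : ((i : Fin k) → ι i × κ i) → ℂ :=
  fun v => ψ (fun i => (v i).1) * φ (fun i => (v i).2)

noncomputable def omegaN {k : ℕ} {ι κ : Fin k → Type} [∀ i, Fintype (ι i)] [∀ i, Fintype (κ i)]
    (ψ : ((i : Fin k) → ι i) → ℂ) (φ : ((i : Fin k) → κ i) → ℂ) (n : ℕ) : ℝ :=
  ((sInf {m : ℕ | Restricts (pow ψ m) (pow φ n)} : ℕ) : ℝ) / n

noncomputable def omega {k : ℕ} {ι κ : Fin k → Type} [∀ i, Fintype (ι i)] [∀ i, Fintype (κ i)]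
    (ψ : ((i : Fin k) → ι i) → ℂ) (φ : ((i : Fin k) → κ i) → ℂ) : ℝ :=
  ⨅ n : ℕ+, omegaN ψ φ n

def GHZ (k a : ℕ) : ((_ : Fin k) → Fin a) → ℂ :=
  fun v => if ∀ i j : Fin k, v i = v j then 1 else 0

def W (k : ℕ) : ((_ : Fin k) → Fin 2) → ℂ :=
  fun v => if (Finset.univ.filter fun i => v i = 1).card = 1 then 1 else 0

def rankLE {k : ℕ} {ι : Fin k → Type} (T : ((i : Fin k) → ι i) → ℂ) (r : ℕ) : Prop :=
  ∃ u : Fin r → (i : Fin k) → ι i → ℂ, ∀ v, T v = ∑ s : Fin r, ∏ i, u s i (v i)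

noncomputable def trank {k : ℕ} {ι : Fin k → Type} (T : ((i : Fin k) → ι i) → ℂ) : ℕ :=
  sInf {r | rankLE T r}

/- ===== auxiliary lemmas ===== -/

lemma restricts_of_comp {k : ℕ} {ι κ : Fin k → Type} [∀ i, Fintype (ι i)] [∀ i, Fintype (κ i)]
    (ψ : ((i : Fin k) → ι i) → ℂ) (φ : ((i : Fin k) → κ i) → ℂ)
    (f : (i : Fin k) → κ i → ι i) (h : ∀ v, φ v = ψ (fun i => f i (v i))) :
    Restricts ψ φ := by
  classical
  refine ⟨fun i x y => if y = f i x then 1 else 0, fun v => ?_⟩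
  rw [h]
  rw [Finset.sum_eq_single (fun i => f i (v i))]
  · simp
  · intro w _ hw
    obtain ⟨i, hi⟩ := Function.ne_iff.mp hw
    rw [Finset.prod_eq_zero (Finset.mem_univ i) (by simp [hi]), zero_mul]
  · simp

lemma restricts_refl {k : ℕ} {ι : Fin k → Type} [∀ i, Fintype (ι i)]
    (ψ : ((i : Fin k) → ι i) → ℂ) : Restricts ψ ψ :=
  restricts_of_comp ψ ψ (fun _ => id) (fun _ => rfl)

lemma restricts_trans {k : ℕ} {ι κ μ : Fin k → Type}
    [∀ i, Fintype (ι i)] [∀ i, Fintype (κ i)] [∀ i, Fintype (μ i)]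
    {ψ : ((i : Fin k) → ι i) → ℂ} {φ : ((i : Fin k) → κ i) → ℂ} {χ : ((i : Fin k) → μ i) → ℂ}
    (h1 : Restricts ψ φ) (h2 : Restricts φ χ) : Restricts ψ χ := by
  classical
  obtain ⟨A, hA⟩ := h1
  obtain ⟨B, hB⟩ := h2
  refine ⟨fun i x y => ∑ z, B i x z * A i z y, fun v => ?_⟩
  have expand : ∀ w : (i : Fin k) → ι i,
      (∏ i, ∑ z, B i (v i) z * A i z (w i))
        = ∑ u : (i : Fin k) → κ i, ∏ i, B i (v i) (u i) * A i (u i) (w i) :=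
    fun w => Fintype.prod_sum _
  simp only [expand, Finset.sum_mul]
  rw [Finset.sum_comm]
  rw [hB v]
  refine Finset.sum_congr rfl fun u _ => ?_
  rw [hA u, Finset.mul_sum]
  refine Finset.sum_congr rfl fun w _ => ?_
  rw [Finset.prod_mul_distrib]
  ring

def pairEquiv {k : ℕ} (α β : Fin k → Type) :
    ((i : Fin k) → α i × β i) ≃ ((i : Fin k) → α i) × ((i : Fin k) → β i) where
  toFun f := (fun i => (f i).1, fun i => (f i).2)
  invFun p := fun i => (p.1 i, p.2 i)
  left_inv _ := rfl
  right_inv _ := rfl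

lemma restricts_tprod {k : ℕ} {ι₁ κ₁ ι₂ κ₂ : Fin k → Type}
    [∀ i, Fintype (ι₁ i)] [∀ i, Fintype (κ₁ i)] [∀ i, Fintype (ι₂ i)] [∀ i, Fintype (κ₂ i)]
    {ψ₁ : ((i : Fin k) → ι₁ i) → ℂ} {φ₁ : ((i : Fin k) → κ₁ i) → ℂ}
    {ψ₂ : ((i : Fin k) → ι₂ i) → ℂ} {φ₂ : ((i : Fin k) → κ₂ i) → ℂ}
    (h1 : Restricts ψ₁ φ₁) (h2 : Restricts ψ₂ φ₂) :
    Restricts (tprod ψ₁ ψ₂) (tprod φ₁ φ₂) := by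
  obtain ⟨A, hA⟩ := h1
  obtain ⟨B, hB⟩ := h2
  refine ⟨fun i x y => A i x.1 y.1 * B i x.2 y.2, fun v => ?_⟩
  rw [Fintype.sum_equiv (pairEquiv ι₁ ι₂).symm
    (fun p => (∏ i, A i ((v i).1) ((((pairEquiv ι₁ ι₂).symm p) i).1)
        * B i ((v i).2) ((((pairEquiv ι₁ ι₂).symm p) i).2)) * tprod ψ₁ ψ₂ ((pairEquiv ι₁ ι₂).symm p))
    (fun w => (∏ i, A i ((v i).1) ((w i).1) * B i ((v i).2) ((w i).2)) * tprod ψ₁ ψ₂ w)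
    (fun p => rfl) |>.symm]
  rw [Fintype.sum_prod_type]
  unfold tprod pairEquiv
  simp only [Equiv.coe_fn_symm_mk]
  rw [hA, hB, Finset.sum_mul_sum]
  refine Finset.sum_congr rfl fun w1 _ => Finset.sum_congr rfl fun w2 _ => ?_
  rw [Finset.prod_mul_distrib]
  ring

lemma tprod_pow_eq {k : ℕ} {ι : Fin k → Type} (ψ : ((i : Fin k) → ι i) → ℂ) (a b : ℕ)
    (v : (i : Fin k) → (Fin a → ι i) × (Fin b → ι i)) :
    tprod (pow ψ a) (pow ψ b) v
      = pow ψ (a + b) (fun i => Fin.append (v i).1 (v i).2) := by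
  unfold tprod pow
  rw [Fin.prod_univ_add]
  simp [Fin.append_left, Fin.append_right]

lemma pow_pow_eq {k : ℕ} {ι : Fin k → Type} (ψ : ((i : Fin k) → ι i) → ℂ) (a b : ℕ)
    (v : (i : Fin k) → (Fin b → Fin a → ι i)) :
    pow (pow ψ a) b v
      = pow ψ (a * b) (fun i s => v i (finProdFinEquiv.symm s).2 (finProdFinEquiv.symm s).1) := by
  unfold pow
  rw [← Fintype.prod_equiv finProdFinEquiv
    (fun p : Fin a × Fin b => ψ (fun i => v i p.2 p.1)) _ (fun p => by simp)]
  rw [Fintype.prod_prod_type]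
  rw [Finset.prod_comm]

lemma ghz_pow_eq (k L : ℕ) (v : (_ : Fin k) → Fin (2 ^ L)) :
    GHZ k (2 ^ L) v
      = pow (GHZ k 2) L (fun i => (finFunctionFinEquiv.symm (v i) : Fin L → Fin 2)) := by
  unfold pow GHZ
  rw [Finset.prod_boole]
  by_cases hc : ∀ i j : Fin k, v i = v j
  · rw [if_pos hc, if_pos (fun j _ i i' =>
      show finFunctionFinEquiv.symm (v i) j = finFunctionFinEquiv.symm (v i') j from
        congrArg (fun y => finFunctionFinEquiv.symm y j) (hc i i'))]
  · rw [if_neg hc, if_neg ?_]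
    intro h
    refine hc fun i i' => finFunctionFinEquiv.symm.injective ?_
    funext j; exact h j (Finset.mem_univ j) i i'

lemma ghz_mono_eq (k a b : ℕ) (h : b ≤ a) (v : (_ : Fin k) → Fin b) :
    GHZ k b v = GHZ k a (fun i => Fin.castLE h (v i)) := by
  unfold GHZ
  by_cases hc : ∀ i j : Fin k, v i = v j
  · rw [if_pos hc, if_pos (fun i j =>
      show Fin.castLE h (v i) = Fin.castLE h (v j) from congrArg (Fin.castLE h) (hc i j))]
  · rw [if_neg hc, if_neg fun hh => hc fun i j => Fin.castLE_injective h (hh i j)]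

lemma ghz_one_eq (k : ℕ) (v : (_ : Fin k) → Fin 2) :
    GHZ k 2 v = pow (GHZ k 2) 1 (fun i (_ : Fin 1) => v i) := by
  unfold pow
  rw [Fin.prod_univ_one]

lemma root_sum (N : ℕ) (hN : 0 < N) (s : ℕ) :
    ∑ j ∈ Finset.range N, (Complex.exp (2 * Real.pi * Complex.I / N)) ^ (j * s)
      = if N ∣ s then (N : ℂ) else 0 := by
  set ζ := Complex.exp (2 * Real.pi * Complex.I / N) with hζ
  have hprim : IsPrimitiveRoot ζ N := Complex.isPrimitiveRoot_exp N hN.ne'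
  have hpow : ∀ j, ζ ^ (j * s) = (ζ ^ s) ^ j := fun j => by rw [← pow_mul, Nat.mul_comm]
  simp only [hpow]
  by_cases hdvd : N ∣ s
  · rw [if_pos hdvd, (hprim.pow_eq_one_iff_dvd s).mpr hdvd]
    simp
  · have h1 : ζ ^ s ≠ 1 := fun h => hdvd ((hprim.pow_eq_one_iff_dvd s).mp h)
    rw [if_neg hdvd, geom_sum_eq h1]
    have h2 : (ζ ^ s) ^ N = 1 := by
      rw [← pow_mul, mul_comm, pow_mul, hprim.pow_eq_one, one_pow]
    rw [h2, sub_self, zero_div]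

lemma interp (N : ℕ) (hN : 0 < N) (Q : Polynomial ℂ) (hQ : Q.natDegree < N) (D : ℕ) :
    ∑ j ∈ Finset.range N,
      (N : ℂ)⁻¹ * (Complex.exp (2 * Real.pi * Complex.I / N)) ^ (j * ((N - 1) * D))
        * ((Complex.exp (2 * Real.pi * Complex.I / N)) ^ j) ^ D
        * Q.eval ((Complex.exp (2 * Real.pi * Complex.I / N)) ^ j)
      = Q.coeff 0 := by
  set ζ := Complex.exp (2 * Real.pi * Complex.I / N) with hζ
  have hNc : (N : ℂ) ≠ 0 := Nat.cast_ne_zero.mpr hN.ne'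
  have heval : ∀ j : ℕ, Q.eval (ζ ^ j) = ∑ m ∈ Finset.range N, Q.coeff m * ζ ^ (j * m) := by
    intro j
    rw [Polynomial.eval_eq_sum_range' hQ]
    exact Finset.sum_congr rfl fun m _ => by rw [← pow_mul, Nat.mul_comm]
  have hcomb : ∀ j : ℕ, ∀ m : ℕ,
      (N : ℂ)⁻¹ * ζ ^ (j * ((N - 1) * D)) * (ζ ^ j) ^ D * (Q.coeff m * ζ ^ (j * m))
        = Q.coeff m * ((N : ℂ)⁻¹ * ζ ^ (j * (N * D + m))) := by
    intro j m
    obtain ⟨N', rfl⟩ : ∃ N', N = N' + 1 := ⟨N - 1, (Nat.succ_pred_eq_of_pos hN).symm⟩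
    have hz : ζ ^ (j * ((N' + 1 - 1) * D)) * ζ ^ (j * D) * ζ ^ (j * m)
        = ζ ^ (j * ((N' + 1) * D + m)) := by
      rw [← pow_add, ← pow_add]
      congr 1
      simp only [Nat.add_sub_cancel]
      ring
    calc (↑(N' + 1) : ℂ)⁻¹ * ζ ^ (j * ((N' + 1 - 1) * D)) * (ζ ^ j) ^ D * (Q.coeff m * ζ ^ (j * m))
        = Q.coeff m * ((↑(N' + 1) : ℂ)⁻¹
            * (ζ ^ (j * ((N' + 1 - 1) * D)) * ζ ^ (j * D) * ζ ^ (j * m))) := by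
          rw [← pow_mul]; ring
      _ = _ := by rw [hz]
  calc ∑ j ∈ Finset.range N, (N : ℂ)⁻¹ * ζ ^ (j * ((N - 1) * D)) * (ζ ^ j) ^ D * Q.eval (ζ ^ j)
      = ∑ j ∈ Finset.range N, ∑ m ∈ Finset.range N,
          Q.coeff m * ((N : ℂ)⁻¹ * ζ ^ (j * (N * D + m))) := by
        refine Finset.sum_congr rfl fun j _ => ?_
        rw [heval j, Finset.mul_sum]
        exact Finset.sum_congr rfl fun m _ => hcomb j m
    _ = ∑ m ∈ Finset.range N, Q.coeff m * ((N : ℂ)⁻¹ *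
          ∑ j ∈ Finset.range N, ζ ^ (j * (N * D + m))) := by
        rw [Finset.sum_comm]
        exact Finset.sum_congr rfl fun m _ => by rw [Finset.mul_sum, Finset.mul_sum]
    _ = Q.coeff 0 := by
        rw [Finset.sum_eq_single 0]
        · rw [root_sum N hN, if_pos ⟨D, rfl⟩, inv_mul_cancel₀ hNc, mul_one]
        · intro m hm hm0
          rw [root_sum N hN, if_neg, mul_zero, mul_zero]
          intro hdvd
          have : N ∣ m := (Nat.dvd_add_right ⟨D, rfl⟩).mp hdvd
          exact hm0 (Nat.eq_zero_of_dvd_of_lt this (Finset.mem_range.mp hm))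
        · intro h; exact absurd (Finset.mem_range.mpr hN) h

lemma sum_pow_expand {k n : ℕ} {ι : Fin k → Type} [∀ i, Fintype (ι i)]
    (ψ : ((i : Fin k) → ι i) → ℂ) (M : (i : Fin k) → Fin n → ι i → ℂ) :
    ∑ w : (i : Fin k) → Fin n → ι i, (∏ i, ∏ t, M i t (w i t)) * pow ψ n w
      = ∏ t : Fin n, ∑ u : (i : Fin k) → ι i, (∏ i, M i t (u i)) * ψ u := by
  rw [Fintype.prod_sum (fun (t : Fin n) (u : (i : Fin k) → ι i) => (∏ i, M i t (u i)) * ψ u)]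
  refine Fintype.sum_equiv (Equiv.piComm (fun (i : Fin k) (_ : Fin n) => ι i)) _ _ fun w => ?_
  show (∏ i, ∏ t, M i t (w i t)) * pow ψ n w = ∏ t, (∏ i, M i t (w i t)) * ψ (fun i => w i t)
  rw [Finset.prod_mul_distrib, Finset.prod_comm]
  rfl

lemma restricts_pow {k : ℕ} {ι κ : Fin k → Type} [∀ i, Fintype (ι i)] [∀ i, Fintype (κ i)]
    {ψ : ((i : Fin k) → ι i) → ℂ} {φ : ((i : Fin k) → κ i) → ℂ}
    (h : Restricts ψ φ) (L : ℕ) : Restricts (pow ψ L) (pow φ L) := by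
  obtain ⟨A, hA⟩ := h
  refine ⟨fun i x y => ∏ t, A i (x t) (y t), fun v => ?_⟩
  rw [show (∑ w : (i : Fin k) → Fin L → ι i, (∏ i, ∏ t, A i (v i t) (w i t)) * pow ψ L w)
      = ∏ t : Fin L, ∑ u : (i : Fin k) → ι i, (∏ i, A i (v i t) (u i)) * ψ u from
    sum_pow_expand ψ (fun i t => A i (v i t))]
  exact Finset.prod_congr rfl fun t _ => hA _

lemma ghz_collapse {k N : ℕ} (hk : 0 < k) (F : ((_ : Fin k) → Fin N) → ℂ) :
    ∑ w : (_ : Fin k) → Fin N, F w * GHZ k N w = ∑ j : Fin N, F (fun _ => j) := by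
  classical
  unfold GHZ
  simp only [mul_ite, mul_one, mul_zero]
  rw [← Finset.sum_filter]
  rw [show Finset.filter (fun w : (_ : Fin k) → Fin N => ∀ i j, w i = w j) Finset.univ
      = Finset.image (fun j : Fin N => (fun _ : Fin k => j)) Finset.univ from ?_]
  · rw [Finset.sum_image]
    intro a _ b _ hab
    exact congrFun hab ⟨0, hk⟩
  · ext w
    simp only [Finset.mem_filter, Finset.mem_univ, true_and, Finset.mem_image]
    constructor
    · intro h
      exact ⟨w ⟨0, hk⟩, funext fun i => (h (⟨0, hk⟩) i)⟩
    · rintro ⟨j, rfl⟩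
      intro i i'; rfl

lemma main_restrict {k : ℕ} {ι κ : Fin k → Type}
    [∀ i, Fintype (ι i)] [∀ i, Fintype (κ i)] (hk : 0 < k)
    (ψ : ((i : Fin k) → ι i) → ℂ) (φ : ((i : Fin k) → κ i) → ℂ)
    (d e : ℕ) (A : (i : Fin k) → κ i → ι i → Polynomial ℂ)
    (φs : Fin e → (((i : Fin k) → κ i) → ℂ))
    (hdeg : ∀ (ε : ℂ) (v : (i : Fin k) → κ i),
      ∑ w : (i : Fin k) → ι i, (∏ i, (A i (v i) (w i)).eval ε) * ψ w
        = ε ^ d * φ v + ∑ j : Fin e, ε ^ (d + 1 + (j : ℕ)) * φs j v)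
    (n : ℕ) :
    Restricts (tprod (pow ψ n) (GHZ k (n * e + 1))) (pow φ n) := by
  classical
  set N := n * e + 1 with hNdef
  have hN : 0 < N := Nat.succ_pos _
  set ζ : ℂ := Complex.exp (2 * Real.pi * Complex.I / N) with hζ
  set c : Fin N → ℂ := fun j => (N : ℂ)⁻¹ * ζ ^ ((j : ℕ) * ((N - 1) * (d * n))) with hc
  set i₀ : Fin k := ⟨0, hk⟩ with hi₀
  refine ⟨fun i x y => (if i = i₀ then c y.2 else 1)
      * ∏ t, (A i (x t) (y.1 t)).eval (ζ ^ (y.2 : ℕ)), fun v => ?_⟩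
  -- the polynomial bookkeeping
  set u : Fin n → ((i : Fin k) → κ i) := fun t => fun i => v i t with hu
  set q : Fin n → Polynomial ℂ := fun t => Polynomial.C (φ (u t))
      + ∑ r : Fin e, Polynomial.X ^ (1 + (r : ℕ)) * Polynomial.C (φs r (u t)) with hq
  set Q : Polynomial ℂ := ∏ t, q t with hQ
  have hq_eval : ∀ (ε : ℂ) (t : Fin n),
      (q t).eval ε = φ (u t) + ∑ r : Fin e, ε ^ (1 + (r : ℕ)) * φs r (u t) := by
    intro ε t
    simp only [hq, Polynomial.eval_add, Polynomial.eval_C, Polynomial.eval_finset_sum,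
      Polynomial.eval_mul, Polynomial.eval_pow, Polynomial.eval_X]
  have hdegq : ∀ t, (q t).natDegree ≤ e := by
    intro t
    refine le_trans (Polynomial.natDegree_add_le _ _) (max_le (by simp) ?_)
    refine Polynomial.natDegree_sum_le_of_forall_le _ _ fun r _ => ?_
    refine le_trans (Polynomial.natDegree_mul_le) ?_
    simp only [Polynomial.natDegree_pow, Polynomial.natDegree_X, Polynomial.natDegree_C,
      mul_one, add_zero]
    omega
  have hdegQ : Q.natDegree < N := by
    refine lt_of_le_of_lt (le_trans (Polynomial.natDegree_prod_le _ _) ?_) (Nat.lt_succ_self (n*e))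
    calc ∑ t : Fin n, (q t).natDegree ≤ ∑ _t : Fin n, e := Finset.sum_le_sum fun t _ => hdegq t
      _ = n * e := by simp [Finset.sum_const, mul_comm]
  have hcoeff0 : Q.coeff 0 = pow φ n v := by
    rw [Polynomial.coeff_zero_eq_eval_zero, hQ, Polynomial.eval_prod]
    refine Finset.prod_congr rfl fun t _ => ?_
    rw [hq_eval]
    simp
    rfl
  have hfact : ∀ (ε : ℂ) (t : Fin n),
      ε ^ d * φ (u t) + ∑ r : Fin e, ε ^ (d + 1 + (r : ℕ)) * φs r (u t)
        = ε ^ d * (q t).eval ε := by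
    intro ε t
    rw [hq_eval, mul_add, Finset.mul_sum]
    refine congrArg _ (Finset.sum_congr rfl fun r _ => ?_)
    rw [← mul_assoc, ← pow_add]
    congr 2
    omega
  have hprodfact : ∀ (ε : ℂ),
      (∏ t : Fin n, (ε ^ d * (q t).eval ε)) = ε ^ (d * n) * Q.eval ε := by
    intro ε
    rw [Finset.prod_mul_distrib, Finset.prod_const, Finset.card_univ, Fintype.card_fin,
      ← pow_mul, hQ, Polynomial.eval_prod]
  -- Step A: split the sum
  calc pow φ n v
      = Q.coeff 0 := hcoeff0.symm
    _ = ∑ j ∈ Finset.range N,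
          (N : ℂ)⁻¹ * ζ ^ (j * ((N - 1) * (d * n))) * (ζ ^ j) ^ (d * n) * Q.eval (ζ ^ j) :=
        (interp N hN Q hdegQ (d * n)).symm
    _ = ∑ j : Fin N, c j * ((ζ ^ (j : ℕ)) ^ (d * n) * Q.eval (ζ ^ (j : ℕ))) := by
        rw [← Fin.sum_univ_eq_sum_range (fun j =>
          (N : ℂ)⁻¹ * ζ ^ (j * ((N - 1) * (d * n))) * (ζ ^ j) ^ (d * n) * Q.eval (ζ ^ j)) N]
        exact Finset.sum_congr rfl fun j _ => by rw [hc]; ring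
    _ = ∑ j : Fin N, c j * ∑ w1 : (i : Fin k) → Fin n → ι i,
          (∏ i, ∏ t, (A i (v i t) (w1 i t)).eval (ζ ^ (j : ℕ))) * pow ψ n w1 := by
        refine Finset.sum_congr rfl fun j _ => ?_
        congr 1
        rw [sum_pow_expand ψ (fun i t y => (A i (v i t) y).eval (ζ ^ (j : ℕ)))]
        rw [← hprodfact]
        exact (Finset.prod_congr rfl fun t _ => (hdeg _ (u t)).trans (hfact _ t)).symm
    _ = ∑ w1 : (i : Fin k) → Fin n → ι i, ∑ j : Fin N,
          (c j * ∏ i, ∏ t, (A i (v i t) (w1 i t)).eval (ζ ^ (j : ℕ))) * pow ψ n w1 := by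
        rw [Finset.sum_comm]
        exact Finset.sum_congr rfl fun j _ => by
          rw [Finset.mul_sum]
          exact Finset.sum_congr rfl fun w1 _ => by ring
    _ = ∑ w1 : (i : Fin k) → Fin n → ι i, ∑ w2 : (_ : Fin k) → Fin N,
          ((∏ i, (if i = i₀ then c (w2 i) else 1)
              * ∏ t, (A i (v i t) (w1 i t)).eval (ζ ^ (w2 i : ℕ))) * pow ψ n w1)
            * GHZ k N w2 := by
        refine Finset.sum_congr rfl fun w1 _ => ?_
        rw [ghz_collapse hk (fun w2 => (∏ i, (if i = i₀ then c (w2 i) else 1)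
              * ∏ t, (A i (v i t) (w1 i t)).eval (ζ ^ (w2 i : ℕ))) * pow ψ n w1)]
        refine Finset.sum_congr rfl fun j _ => ?_
        rw [Finset.prod_mul_distrib, Finset.prod_ite_eq' Finset.univ i₀ (fun _ => c j)]
        simp only [Finset.mem_univ, if_true]
        try ring
    _ = ∑ p : ((i : Fin k) → Fin n → ι i) × ((_ : Fin k) → Fin N),
          (∏ i, (if i = i₀ then c (p.2 i) else 1)
              * ∏ t, (A i (v i t) (p.1 i t)).eval (ζ ^ (p.2 i : ℕ)))
            * (pow ψ n p.1 * GHZ k N p.2) := by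
        rw [Fintype.sum_prod_type]
        exact Finset.sum_congr rfl fun w1 _ => Finset.sum_congr rfl fun w2 _ => by ring
    _ = ∑ w : (i : Fin k) → (Fin n → ι i) × Fin N,
          (∏ i, (if i = i₀ then c ((w i).2) else 1)
              * ∏ t, (A i (v i t) ((w i).1 t)).eval (ζ ^ ((w i).2 : ℕ)))
            * tprod (pow ψ n) (GHZ k N) w := by
        exact (Fintype.sum_equiv (pairEquiv (fun i => Fin n → ι i) (fun _ => Fin N)) _ _
          (fun w => rfl)).symm


lemma zero_restrict {ι κ : Fin 0 → Type} [∀ i, Fintype (ι i)] [∀ i, Fintype (κ i)]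
    (ψ : ((i : Fin 0) → ι i) → ℂ) (φ : ((i : Fin 0) → κ i) → ℂ)
    (d e : ℕ) (A : (i : Fin 0) → κ i → ι i → Polynomial ℂ)
    (φs : Fin e → (((i : Fin 0) → κ i) → ℂ))
    (hdeg : ∀ (ε : ℂ) (v : (i : Fin 0) → κ i),
      ∑ w : (i : Fin 0) → ι i, (∏ i, (A i (v i) (w i)).eval ε) * ψ w
        = ε ^ d * φ v + ∑ j : Fin e, ε ^ (d + 1 + (j : ℕ)) * φs j v)
    (n : ℕ) :
    Restricts (tprod (pow ψ n) (GHZ 0 (n * e + 1))) (pow φ n) := by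
  classical
  set w₀ : (i : Fin 0) → ι i := fun i => i.elim0 with hw₀
  set v₀ : (i : Fin 0) → κ i := fun i => i.elim0 with hv₀
  have hsum : ∀ ε : ℂ, ψ w₀ = ε ^ d * φ v₀ + ∑ j : Fin e, ε ^ (d + 1 + (j : ℕ)) * φs j v₀ := by
    intro ε
    have h := hdeg ε v₀
    rw [show (∑ w : (i : Fin 0) → ι i, (∏ i, (A i (v₀ i) (w i)).eval ε) * ψ w) = ψ w₀ from ?_] at h
    · exact h
    · rw [Finset.univ_unique, Finset.sum_singleton]
      rw [Subsingleton.elim (default : (i : Fin 0) → ι i) w₀]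
      simp
  have hfun : (Polynomial.C (ψ w₀) : Polynomial ℂ)
      = Polynomial.monomial d (φ v₀)
        + ∑ j : Fin e, Polynomial.monomial (d + 1 + (j : ℕ)) (φs j v₀) := by
    apply Polynomial.funext
    intro ε
    simp only [Polynomial.eval_C, Polynomial.eval_add, Polynomial.eval_finset_sum,
      Polynomial.eval_monomial]
    rw [hsum ε]
    exact congrArg₂ _ (mul_comm _ _) (Finset.sum_congr rfl fun j _ => mul_comm _ _)
  have hcoeff : ∀ m : ℕ, (Polynomial.C (ψ w₀)).coeff m
      = (Polynomial.monomial d (φ v₀)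
        + ∑ j : Fin e, Polynomial.monomial (d + 1 + (j : ℕ)) (φs j v₀)).coeff m :=
    fun m => by rw [hfun]
  have hs0 : (∑ j : Fin e, Polynomial.monomial (d + 1 + (j : ℕ)) (φs j v₀)).coeff 0 = 0 := by
    rw [Polynomial.finset_sum_coeff]
    exact Finset.sum_eq_zero fun j _ => by
      rw [Polynomial.coeff_monomial, if_neg (by omega)]
  have hsd : (∑ j : Fin e, Polynomial.monomial (d + 1 + (j : ℕ)) (φs j v₀)).coeff d = 0 := by
    rw [Polynomial.finset_sum_coeff]
    exact Finset.sum_eq_zero fun j _ => by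
      rw [Polynomial.coeff_monomial, if_neg (by omega)]
  have hφψ : φ v₀ = ψ w₀ := by
    have h0 := hcoeff 0
    have hd := hcoeff d
    rw [Polynomial.coeff_add, hs0, add_zero, Polynomial.coeff_monomial, Polynomial.coeff_C,
      if_pos rfl] at h0
    rw [Polynomial.coeff_add, hsd, add_zero, Polynomial.coeff_monomial, Polynomial.coeff_C,
      if_pos (rfl : d = d)] at hd
    by_cases hD : d = 0
    · subst hD
      rw [if_pos rfl] at h0
      exact h0.symm
    · rw [if_neg hD] at h0 hd
      rw [← hd, h0]
  refine restricts_of_comp _ _ (fun i => i.elim0) fun v => ?_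
  show pow φ n v = tprod (pow ψ n) (GHZ 0 (n * e + 1)) _
  unfold tprod pow GHZ
  rw [if_pos (fun i => i.elim0), mul_one]
  refine Finset.prod_congr rfl fun t _ => ?_
  calc φ (fun i => v i t) = φ v₀ := congrArg φ (Subsingleton.elim _ _)
    _ = ψ w₀ := hφψ
    _ = _ := congrArg ψ (Subsingleton.elim _ _)

/-- Degeneration yields asymptotic rate 1: if ψ degenerates to φ with error degree e,
and ω(ψ,GHZ) < ∞, then ψ^{⊗n} ⊗ GHZ_{ne+1} restricts to φ^{⊗n}, hence ω(ψ,φ) ≤ 1. -/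
theorem degeneration_rate_one {k : ℕ} {ι κ : Fin k → Type}
    [∀ i, Fintype (ι i)] [∀ i, Fintype (κ i)]
    (ψ : ((i : Fin k) → ι i) → ℂ) (φ : ((i : Fin k) → κ i) → ℂ)
    (d e : ℕ) (A : (i : Fin k) → κ i → ι i → Polynomial ℂ)
    (φs : Fin e → (((i : Fin k) → κ i) → ℂ))
    (hdeg : ∀ (ε : ℂ) (v : (i : Fin k) → κ i),
      ∑ w : (i : Fin k) → ι i, (∏ i, (A i (v i) (w i)).eval ε) * ψ w
        = ε ^ d * φ v + ∑ j : Fin e, ε ^ (d + 1 + (j : ℕ)) * φs j v)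
    (hGHZfin : ∀ n : ℕ, 0 < n →
      {m : ℕ | Restricts (pow ψ m) (pow (GHZ k 2) n)}.Nonempty) :
    (∀ n : ℕ, 0 < n →
      Restricts (tprod (pow ψ n) (GHZ k (n * e + 1))) (pow φ n)) ∧
    omega ψ φ ≤ 1 := by
  classical
  have part1 : ∀ n : ℕ, Restricts (tprod (pow ψ n) (GHZ k (n * e + 1))) (pow φ n) := by
    intro n
    rcases Nat.eq_zero_or_pos k with hk | hk
    · subst hk
      exact zero_restrict ψ φ d e A φs hdeg n
    · exact main_restrict hk ψ φ d e A φs hdeg n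
  refine ⟨fun n _ => part1 n, ?_⟩
  obtain ⟨m₀, hm₀⟩ := hGHZfin 1 Nat.one_pos
  have hGHZ2 : Restricts (pow ψ m₀) (GHZ k 2) :=
    restricts_trans hm₀
      (restricts_of_comp _ _ (fun i (x : Fin 2) (_ : Fin 1) => x) (ghz_one_eq k))
  set cc := Nat.clog 2 (e + 1) with hcc
  have hbound : ∀ t : ℕ, Restricts (pow ψ (2 ^ t + m₀ * (t + cc))) (pow φ (2 ^ t)) := by
    intro t
    set L := t + cc with hL
    have hLe : 2 ^ t * e + 1 ≤ 2 ^ L := by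
      have h1 : e + 1 ≤ 2 ^ cc := Nat.le_pow_clog one_lt_two _
      have h2 : 1 ≤ 2 ^ t := Nat.one_le_two_pow
      calc 2 ^ t * e + 1 ≤ 2 ^ t * e + 2 ^ t := by omega
        _ = 2 ^ t * (e + 1) := by ring
        _ ≤ 2 ^ t * 2 ^ cc := Nat.mul_le_mul_left _ h1
        _ = 2 ^ L := by rw [hL, pow_add]
    have R2 : Restricts (pow ψ (m₀ * L)) (pow (pow ψ m₀) L) :=
      restricts_of_comp _ _
        (fun i (g : Fin L → Fin m₀ → ι i) (s : Fin (m₀ * L)) =>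
          g (finProdFinEquiv.symm s).2 (finProdFinEquiv.symm s).1)
        (pow_pow_eq ψ m₀ L)
    have R3 : Restricts (pow (pow ψ m₀) L) (pow (GHZ k 2) L) := restricts_pow hGHZ2 L
    have R4 : Restricts (pow (GHZ k 2) L) (GHZ k (2 ^ L)) :=
      restricts_of_comp _ _
        (fun _ (x : Fin (2 ^ L)) => (finFunctionFinEquiv.symm x : Fin L → Fin 2))
        (ghz_pow_eq k L)
    have R5 : Restricts (GHZ k (2 ^ L)) (GHZ k (2 ^ t * e + 1)) :=
      restricts_of_comp _ _
        (fun _ (x : Fin (2 ^ t * e + 1)) => Fin.castLE hLe x)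
        (ghz_mono_eq k (2 ^ L) (2 ^ t * e + 1) hLe)
    have R6 : Restricts (pow ψ (m₀ * L)) (GHZ k (2 ^ t * e + 1)) :=
      restricts_trans (restricts_trans (restricts_trans R2 R3) R4) R5
    have R7 : Restricts (pow ψ (2 ^ t + m₀ * L)) (tprod (pow ψ (2 ^ t)) (pow ψ (m₀ * L))) :=
      restricts_of_comp _ _
        (fun i (p : (Fin (2 ^ t) → ι i) × (Fin (m₀ * L) → ι i)) => Fin.append p.1 p.2)
        (tprod_pow_eq ψ (2 ^ t) (m₀ * L))
    exact restricts_trans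
      (restricts_trans R7 (restricts_tprod (restricts_refl _) R6)) (part1 (2 ^ t))
  have homegaN : ∀ t : ℕ,
      omegaN ψ φ (2 ^ t) ≤ 1 + (m₀ : ℝ) * ((t : ℝ) + (cc : ℝ)) / 2 ^ t := by
    intro t
    have hpos : (0 : ℝ) < 2 ^ t := by positivity
    have hinf : sInf {m : ℕ | Restricts (pow ψ m) (pow φ (2 ^ t))}
        ≤ 2 ^ t + m₀ * (t + cc) := Nat.sInf_le (hbound t)
    unfold omegaN
    calc ((sInf {m : ℕ | Restricts (pow ψ m) (pow φ (2 ^ t))} : ℕ) : ℝ) / ((2 ^ t : ℕ) : ℝ)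
        ≤ ((2 ^ t + m₀ * (t + cc) : ℕ) : ℝ) / ((2 ^ t : ℕ) : ℝ) := by
          gcongr
      _ = 1 + (m₀ : ℝ) * ((t : ℝ) + (cc : ℝ)) / 2 ^ t := by
          push_cast
          rw [add_div, div_self hpos.ne']
  have hlim : Filter.Tendsto (fun t : ℕ => 1 + (m₀ : ℝ) * ((t : ℝ) + (cc : ℝ)) / 2 ^ t)
      Filter.atTop (nhds 1) := by
    have hsumm : Summable (fun t : ℕ => (t : ℝ) * (1 / 2 : ℝ) ^ t) := by
      have := summable_pow_mul_geometric_of_norm_lt_one (R := ℝ) 1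
        (r := (1 / 2 : ℝ))
        (by rw [Real.norm_eq_abs, abs_of_pos (by norm_num : (0:ℝ) < 1/2)]; norm_num)
      simpa using this
    have hA : Filter.Tendsto (fun t : ℕ => (t : ℝ) * (1 / 2 : ℝ) ^ t)
        Filter.atTop (nhds 0) := hsumm.tendsto_atTop_zero
    have hB : Filter.Tendsto (fun t : ℕ => ((1 : ℝ) / 2) ^ t) Filter.atTop (nhds 0) :=
      tendsto_pow_atTop_nhds_zero_of_lt_one (by norm_num) (by norm_num)
    have h2 : Filter.Tendsto (fun t : ℕ => (m₀ : ℝ) * ((t : ℝ) + (cc : ℝ)) / 2 ^ t)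
        Filter.atTop (nhds 0) := by
      have hcomb := (hA.const_mul (m₀ : ℝ)).add (hB.const_mul ((m₀ : ℝ) * (cc : ℝ)))
      simp only [mul_zero, add_zero] at hcomb
      refine hcomb.congr fun t => ?_
      have h2t : (2 : ℝ) ^ t ≠ 0 := by positivity
      field_simp
      have h12 : ((1:ℝ) / 2) ^ t * 2 ^ t = 1 := by rw [← mul_pow]; norm_num
      linear_combination ((m₀ : ℝ) * (t : ℝ) + (m₀ : ℝ) * (cc : ℝ)) * h12
    have := (tendsto_const_nhds (x := (1 : ℝ)) (f := Filter.atTop (α := ℕ))).add h2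
    simpa using this
  have hbdd : BddBelow (Set.range fun n : ℕ+ => omegaN ψ φ n) := by
    refine ⟨0, ?_⟩
    rintro x ⟨n, rfl⟩
    unfold omegaN
    positivity
  have homega : ∀ t : ℕ, omega ψ φ ≤ 1 + (m₀ : ℝ) * ((t : ℝ) + (cc : ℝ)) / 2 ^ t := by
    intro t
    refine le_trans (ciInf_le hbdd (⟨2 ^ t, by positivity⟩ : ℕ+)) (le_of_eq_of_le ?_ (homegaN t))
    rfl
  exact ge_of_tendsto' hlim homega

end Paper
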